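/- For every n ≥ 1, every k = (k_1,…,k_n) ∈ ℤ^n, and every x ∈ ℤ, sgt(k_1,…,k_n) = Σ_{i=1}^{n} sgt(k_1,…,k_{i−1}, x+n−i, k_{i+1},…,k_n). -/

import Mathlib

/-- The signed sum `Σ'_{l=a..b} f(l)`: the ordinary sum over `[a,b]` when `a ≤ b`,
and `-Σ_{l=b+1}^{a-1} f(l)` when `a > b`. -/
noncomputable def ssum (a b : ℤ) (f : ℤ → ℤ) : ℤ :=
  if a ≤ b then ∑ l ∈ Finset.Icc a b, f l else -∑ l ∈ Finset.Icc (b + 1) (a - 1), f l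

/-- Iterated signed sum over the box `[a 0, b 0] × ⋯ × [a (m-1), b (m-1)]`,
one signed sum per coordinate. -/
noncomputable def sbox : (m : ℕ) → (Fin m → ℤ) → (Fin m → ℤ) → ((Fin m → ℤ) → ℤ) → ℤ
  | 0, _, _, f => f Fin.elim0
  | m + 1, a, b, f =>
      ssum (a 0) (b 0) fun l =>
        sbox m (fun i => a i.succ) (fun i => b i.succ) fun t => f (Fin.cons l t)

/-- The signed Gelfand–Tsetlin count: `sgt k = 1` for tuples of length `≤ 1`, and
`sgt (k_1,…,k_n) = Σ'_{l_1=k_1..k_2} ⋯ Σ'_{l_{n-1}=k_{n-1}..k_n} sgt (l_1,…,l_{n-1})`. -/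
noncomputable def sgt : (n : ℕ) → (Fin n → ℤ) → ℤ
  | 0, _ => 1
  | 1, _ => 1
  | n + 2, k => sbox (n + 1) (fun i => k i.castSucc) (fun i => k i.succ) (sgt (n + 1))


open Finset Polynomial

namespace SgtAux

noncomputable def qsum {M : Type*} [AddCommGroup M] (a b : ℤ) (f : ℤ → M) : M :=
  if a ≤ b then ∑ l ∈ Finset.Icc a b, f l else -∑ l ∈ Finset.Icc (b + 1) (a - 1), f l

lemma sum_Icc_telescope {M : Type*} [AddCommGroup M] (F : ℤ → M) (a b : ℤ) (hb : a - 1 ≤ b) :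
    ∑ l ∈ Finset.Icc a b, (F l - F (l - 1)) = F b - F (a - 1) := by
  refine Int.le_induction
    (motive := fun b _ => ∑ l ∈ Finset.Icc a b, (F l - F (l - 1)) = F b - F (a - 1)) ?_ ?_ b hb
  · show ∑ l ∈ Finset.Icc a (a - 1), (F l - F (l - 1)) = F (a - 1) - F (a - 1)
    rw [Finset.Icc_eq_empty (by omega)]; simp
  · intro b hb ih
    show ∑ l ∈ Finset.Icc a (b + 1), (F l - F (l - 1)) = F (b + 1) - F (a - 1)
    have hins : Finset.Icc a (b + 1) = insert (b + 1) (Finset.Icc a b) := by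
      ext t; simp only [Finset.mem_Icc, Finset.mem_insert]; omega
    have h1 : b + 1 - 1 = b := by omega
    rw [hins, Finset.sum_insert (by simp), ih, h1]
    abel

lemma qsum_eq {M : Type*} [AddCommGroup M] (f F : ℤ → M)
    (hF : ∀ t, F t - F (t - 1) = f t) (a b : ℤ) :
    qsum a b f = F b - F (a - 1) := by
  have key : ∀ (u v : ℤ), u - 1 ≤ v → ∑ l ∈ Finset.Icc u v, f l = F v - F (u - 1) := by
    intro u v huv
    rw [← sum_Icc_telescope F u v huv]
    exact Finset.sum_congr rfl fun t _ => (hF t).symm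
  unfold qsum
  split_ifs with h
  · exact key a b (by omega)
  · rw [key (b + 1) (a - 1) (by omega)]
    have h1 : b + 1 - 1 = b := by omega
    rw [h1]; abel

lemma map_qsum {M N : Type*} [AddCommGroup M] [AddCommGroup N] (ψ : M →+ N) (a b : ℤ)
    (f : ℤ → M) : ψ (qsum a b f) = qsum a b fun l => ψ (f l) := by
  unfold qsum
  split_ifs <;> simp


noncomputable def qbox : (m : ℕ) → (Fin m → ℤ) → (Fin m → ℤ) → ((Fin m → ℤ) → ℚ) → ℚ
  | 0, _, _, f => f Fin.elim0
  | m + 1, a, b, f =>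
      qsum (a 0) (b 0) fun l =>
        qbox m (fun i => a i.succ) (fun i => b i.succ) fun t => f (Fin.cons l t)

lemma ssum_cast (a b : ℤ) (f : ℤ → ℤ) :
    ((ssum a b f : ℤ) : ℚ) = qsum a b fun l => ((f l : ℤ) : ℚ) := by
  unfold ssum qsum
  split_ifs <;> push_cast <;> ring

lemma sbox_cast : ∀ (m : ℕ) (a b : Fin m → ℤ) (f : (Fin m → ℤ) → ℤ),
    ((sbox m a b f : ℤ) : ℚ) = qbox m a b fun l => ((f l : ℤ) : ℚ)
  | 0, _, _, _ => rfl
  | m + 1, a, b, f => by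
    rw [sbox, qbox, ssum_cast]
    congr 1
    funext l
    exact sbox_cast m _ _ _


lemma qbox_multilinear {M : Type*} [AddCommGroup M] [Module ℚ M] :
    ∀ (m : ℕ) (a b : Fin m → ℤ) (g : Fin m → ℤ → M)
      (φ : MultilinearMap ℚ (fun _ : Fin m => M) ℚ),
      qbox m a b (fun l => φ fun i => g i (l i)) = φ fun i => qsum (a i) (b i) (g i)
  | 0, _, _, g, φ => by
    rw [qbox]
    congr 1
    funext i
    exact i.elim0
  | m + 1, a, b, g, φ => by
    rw [qbox]
    have h1 : ∀ (l : ℤ) (t : Fin m → ℤ),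
        (fun i => g i (Fin.cons (α := fun _ => ℤ) l t i)) = Fin.cons (α := fun _ => M) (g 0 l)
          (fun i => g i.succ (t i)) := by
      intro l t
      funext i
      refine Fin.cases ?_ (fun i' => ?_) i <;> simp
    have h2 : ∀ l : ℤ,
        (qbox m (fun i => a i.succ) (fun i => b i.succ) fun t => φ fun i => g i (Fin.cons (α := fun _ => ℤ) l t i))
          = φ (Fin.cons (g 0 l) fun i => qsum (a i.succ) (b i.succ) (g i.succ)) := by
      intro l
      have := qbox_multilinear m (fun i => a i.succ) (fun i => b i.succ)
        (fun i => g i.succ) (φ.curryLeft (g 0 l))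
      simp only [MultilinearMap.curryLeft_apply] at this
      rw [← this]
      congr 1
      funext t
      rw [h1]
    simp only [h2]
    set W := fun i : Fin m => qsum (a i.succ) (b i.succ) (g i.succ) with hW
    have h3 : qsum (a 0) (b 0) (fun l => φ (Fin.cons (g 0 l) W))
        = φ (Fin.cons (qsum (a 0) (b 0) (g 0)) W) := by
      have := map_qsum (AddMonoidHom.mk' (fun x : M => φ (Fin.cons x W))
        (fun x y => φ.cons_add W x y)) (a 0) (b 0) (g 0)
      simp only [AddMonoidHom.mk'_apply] at this
      rw [this]
    rw [h3]
    congr 1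
    funext i
    refine Fin.cases ?_ (fun i' => ?_) i <;> simp [hW]


def Vd {F : Type*} [CommRing F] {m : ℕ} (z : Fin m → F) : F :=
  ∏ i : Fin m, ∏ j ∈ Finset.Ioi i, (z j - z i)

lemma vd_eq_zero {F : Type*} [CommRing F] {m : ℕ} {z : Fin m → F} {a b : Fin m}
    (hab : a < b) (h : z a = z b) : Vd z = 0 := by
  unfold Vd
  refine Finset.prod_eq_zero (Finset.mem_univ a) ?_
  refine Finset.prod_eq_zero (Finset.mem_Ioi.mpr hab) ?_
  rw [h, sub_self]

lemma map_vd {F G : Type*} [CommRing F] [CommRing G] (ψ : F →+* G) {m : ℕ} (z : Fin m → F) :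
    ψ (Vd z) = Vd fun i => ψ (z i) := by
  simp only [Vd, map_prod, map_sub]

lemma lagrange_field {K : Type*} [Field K] {m : ℕ} (hm : 0 < m) (z : Fin m → K)
    (hz : Function.Injective z) (c : K) :
    ∑ i : Fin m, Vd (Function.update z i c) = Vd z := by
  classical
  set e : Fin m → Fin m → K[X] := fun i t => if t = i then X else C (z t) with he
  have hterm : ∀ (i : Fin m) (u : K),
      (∏ i' : Fin m, ∏ j' ∈ Finset.Ioi i', (e i j' - e i i')).eval u
        = Vd (Function.update z i u) := by
    intro i u
    rw [eval_prod]
    refine Finset.prod_congr rfl fun i' _ => ?_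
    rw [eval_prod]
    refine Finset.prod_congr rfl fun j' _ => ?_
    have huu : ∀ t, (e i t).eval u = Function.update z i u t := by
      intro t
      by_cases h : t = i <;> simp [he, h, Function.update]
    simp [eval_sub, huu]
  set P : K[X] := (∑ i : Fin m, ∏ i' : Fin m, ∏ j' ∈ Finset.Ioi i', (e i j' - e i i'))
      - C (Vd z) with hP
  have hterm_deg : ∀ i : Fin m,
      (∏ i' : Fin m, ∏ j' ∈ Finset.Ioi i', (e i j' - e i i')).natDegree ≤ m - 1 := by
    intro i
    calc (∏ i' : Fin m, ∏ j' ∈ Finset.Ioi i', (e i j' - e i i')).natDegree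
        ≤ ∑ i' : Fin m, (∏ j' ∈ Finset.Ioi i', (e i j' - e i i')).natDegree :=
          Polynomial.natDegree_prod_le _ _
      _ ≤ ∑ i' : Fin m, ∑ j' ∈ Finset.Ioi i', (e i j' - e i i').natDegree :=
          Finset.sum_le_sum fun i' _ => Polynomial.natDegree_prod_le _ _
      _ ≤ ∑ i' : Fin m, ∑ j' ∈ Finset.Ioi i',
            ((if i' = i then 1 else 0) + (if j' = i then 1 else 0)) := by
          refine Finset.sum_le_sum fun i' _ => Finset.sum_le_sum fun j' hj' => ?_
          by_cases h1 : i' = i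
          · have h2 : j' ≠ i := by subst h1; exact (Finset.mem_Ioi.mp hj').ne'
            have hee : e i j' - e i i' = C (z j') - X := by rw [he]; simp [h1, h2]
            rw [hee, if_pos h1, if_neg h2]
            refine le_trans (Polynomial.natDegree_sub_le _ _) ?_
            simp
          · by_cases h2 : j' = i
            · have hee : e i j' - e i i' = X - C (z i') := by rw [he]; simp [h1, h2]
              rw [hee, if_neg h1, if_pos h2]
              refine le_trans (Polynomial.natDegree_sub_le _ _) ?_
              simp
            · have hee : e i j' - e i i' = C (z j' - z i') := by
                rw [he]; simp [h1, h2, map_sub]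
              rw [hee, if_neg h1, if_neg h2, Polynomial.natDegree_C]
      _ = ∑ i' : Fin m, ((if i' = i then (Finset.Ioi i').card else 0)
            + (if i' ∈ Finset.Iio i then 1 else 0)) := by
          refine Finset.sum_congr rfl fun i' _ => ?_
          rw [Finset.sum_add_distrib, Finset.sum_const, Finset.sum_ite_eq' (Finset.Ioi i') i
            (fun _ => (1:ℕ))]
          congr 1
          · by_cases h : i' = i <;> simp [h]
          · by_cases h : i' < i <;> simp [Finset.mem_Ioi, Finset.mem_Iio, h]
      _ = (Finset.Ioi i).card + (Finset.Iio i).card := by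
          rw [Finset.sum_add_distrib, Finset.sum_ite_eq' Finset.univ i
            (fun t => (Finset.Ioi t).card)]
          simp only [Finset.mem_univ, if_pos]
          congr 1
          have hfil : Finset.filter (fun x => x ∈ Finset.Iio i) Finset.univ = Finset.Iio i := by
            ext t; simp
          rw [Finset.sum_ite_mem]
          simp [Finset.univ_inter]
      _ ≤ m - 1 := by
          rw [Fin.card_Ioi, Fin.card_Iio]
          have := i.isLt
          omega
  have hdeg : P.natDegree < m := by
    have h1 : (∑ i : Fin m, ∏ i' : Fin m, ∏ j' ∈ Finset.Ioi i', (e i j' - e i i')).natDegree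
        ≤ m - 1 := le_trans (Polynomial.natDegree_sum_le _ _) (by
          rw [Finset.fold_max_le]
          exact ⟨Nat.zero_le _, fun i _ => hterm_deg i⟩)
    have h2 : P.natDegree ≤ m - 1 :=
      le_trans (Polynomial.natDegree_sub_le _ _) (by simp [h1])
    omega
  have heval : ∀ t : Fin m, P.eval (z t) = 0 := by
    intro t
    rw [hP]
    rw [eval_sub, eval_C, Polynomial.eval_finset_sum]
    have hv : ∀ i : Fin m,
        (∏ i' : Fin m, ∏ j' ∈ Finset.Ioi i', (e i j' - e i i')).eval (z t)
          = if i = t then Vd z else 0 := by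
      intro i
      rw [hterm]
      by_cases h : i = t
      · rw [h, if_pos rfl, Function.update_eq_self]
      · rw [if_neg h]
        rcases lt_or_gt_of_ne h with hlt | hlt
        · refine vd_eq_zero hlt ?_
          rw [Function.update_self, Function.update_of_ne (ne_of_gt hlt)]
        · refine vd_eq_zero hlt ?_
          rw [Function.update_self, Function.update_of_ne (ne_of_lt hlt)]
    rw [Finset.sum_congr rfl fun i _ => hv i]
    simp
  have hP0 : P = 0 :=
    Polynomial.eq_zero_of_natDegree_lt_card_of_eval_eq_zero P hz heval
      (by rwa [Fintype.card_fin])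
  have hc := congrArg (Polynomial.eval c) hP0
  rw [hP] at hc
  rw [eval_sub, eval_C, Polynomial.eval_finset_sum, eval_zero] at hc
  rw [Finset.sum_congr rfl fun (i : Fin m) (_ : i ∈ Finset.univ) => hterm i c] at hc
  exact sub_eq_zero.mp hc

lemma lagrange_rat {m : ℕ} (hm : 0 < m) (z : Fin m → ℚ) (c : ℚ) :
    ∑ i : Fin m, Vd (Function.update z i c) = Vd z := by
  classical
  let ψ : MvPolynomial (Option (Fin m)) ℚ →+* FractionRing (MvPolynomial (Option (Fin m)) ℚ) :=
    algebraMap _ _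
  have hinj : Function.Injective ψ := IsFractionRing.injective _ _
  let zR : Fin m → MvPolynomial (Option (Fin m)) ℚ := fun i => MvPolynomial.X (some i)
  let cR : MvPolynomial (Option (Fin m)) ℚ := MvPolynomial.X none
  have hzinj : Function.Injective fun i => ψ (zR i) := by
    intro i j h
    have h2 := MvPolynomial.X_injective (R := ℚ) (hinj h)
    exact Option.some_injective _ h2
  have hfield := lagrange_field hm (fun i => ψ (zR i)) hzinj (ψ cR)
  have hupd : ∀ i : Fin m,
      Function.update (fun t => ψ (zR t)) i (ψ cR) = fun t => ψ (Function.update zR i cR t) := by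
    intro i
    funext t
    by_cases h : t = i
    · subst h; simp
    · rw [Function.update_of_ne h, Function.update_of_ne h]
  have hstep : ψ (∑ i : Fin m, Vd (Function.update zR i cR)) = ψ (Vd zR) := by
    rw [map_sum, map_vd, ← hfield]
    refine Finset.sum_congr rfl fun i _ => ?_
    rw [map_vd, hupd i]
  have hR_eq : ∑ i : Fin m, Vd (Function.update zR i cR) = Vd zR := hinj hstep
  let ev : MvPolynomial (Option (Fin m)) ℚ →+* ℚ :=
    MvPolynomial.eval (fun o : Option (Fin m) => o.elim c z)
  have hevz : ∀ t, ev (zR t) = z t := fun t => by simp [ev, zR]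
  have hevc : ev cR = c := by simp [ev, cR]
  have hupd2 : ∀ i : Fin m,
      (fun t => ev (Function.update zR i cR t)) = Function.update z i c := by
    intro i
    funext t
    by_cases h : t = i
    · subst h; simp [hevc]
    · rw [Function.update_of_ne h, Function.update_of_ne h, hevz]
  have hc2 := congrArg ev hR_eq
  rw [map_sum, map_vd] at hc2
  rw [Finset.sum_congr rfl fun (i : Fin m) (_ : i ∈ Finset.univ) =>
    by rw [map_vd, hupd2 i]] at hc2
  have hz2 : (fun i => ev (zR i)) = z := funext hevz
  rw [hz2] at hc2
  exact hc2


lemma det_poly_eq_vd {m : ℕ} (Z : Fin m → ℚ) :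
    (Matrix.of fun i j : Fin m => (descPochhammer ℚ (j : ℕ)).eval (Z i)).det = Vd Z := by
  rw [← Matrix.det_eval_matrixOfPolynomials_eq_det_vandermonde Z
    (fun j => descPochhammer ℚ (j : ℕ)) (fun j => descPochhammer_natDegree (R := ℚ) (j : ℕ))
    (fun j => monic_descPochhammer ℚ _), Matrix.det_vandermonde]
  rfl

lemma det_step {n : ℕ} (Z : Fin (n + 2) → ℚ) :
    (Matrix.of fun i j : Fin (n + 1) =>
        (descPochhammer ℚ ((j : ℕ) + 1)).eval (Z i.succ)
          - (descPochhammer ℚ ((j : ℕ) + 1)).eval (Z i.castSucc)).det = Vd Z := by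
  classical
  set A : Matrix (Fin (n + 2)) (Fin (n + 2)) ℚ :=
    Matrix.of fun i j => (descPochhammer ℚ (j : ℕ)).eval (Z i) with hA
  set S : Matrix (Fin (n + 2)) (Fin (n + 2)) ℚ :=
    Matrix.of fun i j => Fin.cases (motive := fun _ => ℚ) (if j = 0 then 1 else 0)
      (fun i' => (if j = i'.succ then 1 else 0) - (if j = i'.castSucc then 1 else 0)) i with hS
  have hStri : S.BlockTriangular OrderDual.toDual := by
    intro i j hij
    have hij' : i < j := hij
    induction i using Fin.cases with
    | zero =>
      show (if j = 0 then (1:ℚ) else 0) = 0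
      rw [if_neg (ne_of_gt hij')]
    | succ i' =>
      show (if j = i'.succ then (1:ℚ) else 0) - (if j = i'.castSucc then 1 else 0) = 0
      rw [if_neg (ne_of_gt hij'), if_neg, sub_zero]
      exact ne_of_gt (lt_trans (Fin.castSucc_lt_succ (i := i')) hij')
  have hSdet : S.det = 1 := by
    rw [Matrix.det_of_lowerTriangular S hStri]
    refine Finset.prod_eq_one fun i _ => ?_
    induction i using Fin.cases with
    | zero =>
      show (if (0 : Fin (n + 2)) = 0 then (1:ℚ) else 0) = 1
      rw [if_pos rfl]
    | succ i' =>
      show (if i'.succ = i'.succ then (1:ℚ) else 0)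
        - (if i'.succ = i'.castSucc then 1 else 0) = 1
      rw [if_pos rfl, if_neg (Fin.castSucc_lt_succ (i := i')).ne', sub_zero]
  set B : Matrix (Fin (n + 2)) (Fin (n + 2)) ℚ := S * A with hB
  have hBdet : B.det = Vd Z := by
    rw [hB, Matrix.det_mul, hSdet, one_mul, hA, det_poly_eq_vd]
  have hBzero : ∀ j, B 0 j = A 0 j := by
    intro j
    rw [hB, Matrix.mul_apply]
    have : ∀ t : Fin (n + 2), S 0 t * A t j = (if t = 0 then A t j else 0) := by
      intro t
      show (if t = 0 then (1:ℚ) else 0) * A t j = _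
      by_cases h : t = 0 <;> simp [h]
    rw [Finset.sum_congr rfl fun t _ => this t, Finset.sum_ite_eq' Finset.univ 0 fun t => A t j]
    simp
  have hBsucc : ∀ (i' : Fin (n + 1)) (j), B i'.succ j = A i'.succ j - A i'.castSucc j := by
    intro i' j
    rw [hB, Matrix.mul_apply]
    have : ∀ t : Fin (n + 2), S i'.succ t * A t j
        = (if t = i'.succ then A t j else 0) - (if t = i'.castSucc then A t j else 0) := by
      intro t
      show ((if t = i'.succ then (1:ℚ) else 0) - (if t = i'.castSucc then 1 else 0)) * A t j = _
      by_cases h1 : t = i'.succ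
      · have h2 : t ≠ i'.castSucc := by rw [h1]; exact (Fin.castSucc_lt_succ (i := i')).ne'
        simp [h1, h2, (Fin.castSucc_lt_succ (i := i')).ne']
      · by_cases h2 : t = i'.castSucc <;>
          simp [h1, h2, (Fin.castSucc_lt_succ (i := i')).ne, (Fin.castSucc_lt_succ (i := i')).ne']
    rw [Finset.sum_congr rfl fun t _ => this t, Finset.sum_sub_distrib,
      Finset.sum_ite_eq' Finset.univ i'.succ fun t => A t j,
      Finset.sum_ite_eq' Finset.univ i'.castSucc fun t => A t j]
    simp
  have hA0 : ∀ i : Fin (n + 2), A i 0 = 1 := by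
    intro i
    show (descPochhammer ℚ ((0 : Fin (n + 2)) : ℕ)).eval (Z i) = 1
    norm_num [descPochhammer]
  have hB0 : ∀ i : Fin (n + 2), B i 0 = if i = 0 then 1 else 0 := by
    intro i
    induction i using Fin.cases with
    | zero => rw [hBzero, hA0, if_pos rfl]
    | succ i' =>
      rw [hBsucc, hA0, hA0, sub_self, if_neg (Fin.succ_ne_zero i')]
  have hexp := Matrix.det_succ_column_zero B
  rw [Finset.sum_eq_single (0 : Fin (n + 2)) ?side ?notmem] at hexp
  case side =>
    intro i _ hi
    rw [hB0, if_neg hi]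
    ring
  case notmem => intro h; exact absurd (Finset.mem_univ _) h
  rw [hB0, if_pos rfl] at hexp
  simp only [Fin.val_zero, pow_zero, one_mul, mul_one] at hexp
  rw [← hBdet, hexp]
  congr 1
  funext i j
  rw [Matrix.submatrix_apply, Fin.succAbove_zero, hBsucc]
  rfl


def cc : ℕ → ℚ
  | 0 => 1
  | m + 1 => cc m * (Nat.factorial m : ℚ)

lemma cc_ne_zero : ∀ m, cc m ≠ 0
  | 0 => one_ne_zero
  | m + 1 => mul_ne_zero (cc_ne_zero m) (by positivity)

lemma desc_diff (j : ℕ) (s : ℚ) :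
    (descPochhammer ℚ (j + 1)).eval (s + 1) - (descPochhammer ℚ (j + 1)).eval s
      = ((j : ℚ) + 1) * (descPochhammer ℚ j).eval s := by
  nth_rewrite 1 [descPochhammer_succ_left]
  rw [descPochhammer_succ_eval]
  simp only [eval_mul, eval_X, eval_comp, eval_sub, eval_one]
  have : s + 1 - 1 = s := by ring
  rw [this]
  ring

lemma prod_fact (n : ℕ) : ∏ j : Fin (n + 1), (((j : ℕ) : ℚ) + 1) = (Nat.factorial (n + 1) : ℚ) := by
  induction n with
  | zero => simp [Nat.factorial]
  | succ n ih =>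
    rw [Fin.prod_univ_castSucc]
    have hc : ∀ j : Fin (n + 1), ((j.castSucc : ℕ) : ℚ) + 1 = ((j : ℕ) : ℚ) + 1 := by
      intro j; rw [Fin.coe_castSucc]
    rw [Finset.prod_congr rfl fun j _ => hc j, ih]
    rw [Nat.factorial_succ (n + 1)]
    push_cast
    ring

lemma sgt_mul_cc : ∀ (n : ℕ) (k : Fin (n + 1) → ℤ),
    ((sgt (n + 1) k : ℤ) : ℚ) * cc (n + 1) = Vd fun i : Fin (n + 1) => ((k i : ℤ) : ℚ) + (i : ℕ)
  | 0, k => by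
    show ((1 : ℤ) : ℚ) * cc 1 = _
    rw [show cc 1 = cc 0 * (Nat.factorial 0 : ℚ) from rfl]
    simp [cc, Vd]
  | n + 1, k => by
    have hc := cc_ne_zero (n + 1)
    have hfact : ((Nat.factorial (n + 1) : ℕ) : ℚ) ≠ 0 := by positivity
    set Z : Fin (n + 2) → ℚ := fun i => ((k i : ℤ) : ℚ) + (i : ℕ) with hZ
    set g : Fin (n + 1) → ℤ → (Fin (n + 1) → ℚ) :=
      fun i t => fun j => (descPochhammer ℚ (j : ℕ)).eval (((t : ℤ) : ℚ) + (i : ℕ)) with hg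
    set φ : MultilinearMap ℚ (fun _ : Fin (n + 1) => (Fin (n + 1) → ℚ)) ℚ :=
      (cc (n + 1))⁻¹ • (Matrix.detRowAlternating (n := Fin (n + 1)) (R := ℚ)).toMultilinearMap
      with hφ
    have claim1 : ∀ l : Fin (n + 1) → ℤ,
        ((sgt (n + 1) l : ℤ) : ℚ) = φ fun i => g i (l i) := by
      intro l
      have h1 : φ (fun i => g i (l i))
          = (cc (n + 1))⁻¹ * (Matrix.of fun i j : Fin (n + 1) =>
              (descPochhammer ℚ (j : ℕ)).eval (((l i : ℤ) : ℚ) + (i : ℕ))).det := by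
        rw [hφ]
        rfl
      rw [h1, det_poly_eq_vd (fun i : Fin (n + 1) => ((l i : ℤ) : ℚ) + (i : ℕ)),
        ← sgt_mul_cc n l]
      field_simp
    have hsgt : sgt (n + 2) k
        = sbox (n + 1) (fun i => k i.castSucc) (fun i => k i.succ) (sgt (n + 1)) := rfl
    have hcast : ((sgt (n + 2) k : ℤ) : ℚ)
        = qbox (n + 1) (fun i => k i.castSucc) (fun i => k i.succ)
            fun l => ((sgt (n + 1) l : ℤ) : ℚ) := by
      rw [hsgt, sbox_cast]
    have hfuns : (fun l : Fin (n + 1) → ℤ => ((sgt (n + 1) l : ℤ) : ℚ))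
        = fun l => φ fun i => g i (l i) := funext claim1
    rw [hcast, hfuns, qbox_multilinear]
    have claim2 : (fun i : Fin (n + 1) => qsum (k i.castSucc) (k i.succ) (g i))
        = fun i : Fin (n + 1) => fun j : Fin (n + 1) =>
            ((descPochhammer ℚ ((j : ℕ) + 1)).eval (Z i.succ)
              - (descPochhammer ℚ ((j : ℕ) + 1)).eval (Z i.castSucc)) * (((j : ℕ) : ℚ) + 1)⁻¹ := by
      funext i j
      have hcomp : qsum (k i.castSucc) (k i.succ) (g i) j
          = qsum (k i.castSucc) (k i.succ) fun t => g i t j := by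
        have := map_qsum (Pi.evalAddMonoidHom (fun _ : Fin (n + 1) => ℚ) j)
          (k i.castSucc) (k i.succ) (g i)
        exact this
      rw [hcomp]
      have hq := qsum_eq (fun t : ℤ => g i t j)
        (fun t : ℤ => (descPochhammer ℚ ((j : ℕ) + 1)).eval (((t : ℤ) : ℚ) + (i : ℕ) + 1)
          * (((j : ℕ) : ℚ) + 1)⁻¹) ?_ (k i.castSucc) (k i.succ)
      · rw [hq]
        have hb : ((k i.succ : ℤ) : ℚ) + (i : ℕ) + 1 = Z i.succ := by
          simp only [hZ, Fin.val_succ]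
          push_cast
          ring
        have ha : ((k i.castSucc - 1 : ℤ) : ℚ) + (i : ℕ) + 1 = Z i.castSucc := by
          simp only [hZ, Fin.coe_castSucc]
          push_cast
          ring
        rw [hb, ha]
        ring
      · intro t
        beta_reduce
        have h1 : ((t - 1 : ℤ) : ℚ) + (i : ℕ) + 1 = ((t : ℤ) : ℚ) + (i : ℕ) := by
          push_cast; ring
        rw [h1]
        have h2 := desc_diff (j : ℕ) (((t : ℤ) : ℚ) + (i : ℕ))
        rw [hg]
        field_simp
        linear_combination h2
    rw [claim2]
    have h3 : φ (fun i : Fin (n + 1) => fun j : Fin (n + 1) =>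
          ((descPochhammer ℚ ((j : ℕ) + 1)).eval (Z i.succ)
            - (descPochhammer ℚ ((j : ℕ) + 1)).eval (Z i.castSucc)) * (((j : ℕ) : ℚ) + 1)⁻¹)
        = (cc (n + 1))⁻¹ * (Matrix.of fun i j : Fin (n + 1) =>
            (((j : ℕ) : ℚ) + 1)⁻¹ * ((descPochhammer ℚ ((j : ℕ) + 1)).eval (Z i.succ)
              - (descPochhammer ℚ ((j : ℕ) + 1)).eval (Z i.castSucc))).det := by
      rw [hφ]
      show (cc (n + 1))⁻¹ * Matrix.det _ = _
      congr 2
      funext i j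
      rw [mul_comm]
      rfl
    rw [h3, Matrix.det_mul_row (fun j : Fin (n + 1) => (((j : ℕ) : ℚ) + 1)⁻¹)
      (fun i j : Fin (n + 1) => (descPochhammer ℚ ((j : ℕ) + 1)).eval (Z i.succ)
        - (descPochhammer ℚ ((j : ℕ) + 1)).eval (Z i.castSucc))]
    rw [show (Matrix.det fun i j : Fin (n + 1) =>
        (descPochhammer ℚ ((j : ℕ) + 1)).eval (Z i.succ)
          - (descPochhammer ℚ ((j : ℕ) + 1)).eval (Z i.castSucc)) = Vd Z from det_step Z]
    have h4 : ∏ j : Fin (n + 1), (((j : ℕ) : ℚ) + 1)⁻¹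
        = ((Nat.factorial (n + 1) : ℕ) : ℚ)⁻¹ := by
      rw [← prod_fact n]
      rw [← Finset.prod_inv_distrib]
    rw [h4]
    rw [show cc (n + 2) = cc (n + 1) * (Nat.factorial (n + 1) : ℚ) from rfl]
    field_simp

end SgtAux


/-- For every `n ≥ 1`, `k ∈ ℤ^n` and `x ∈ ℤ`,
`sgt (k_1,…,k_n) = Σ_{i=1}^{n} sgt (k_1,…,k_{i-1}, x+n-i, k_{i+1},…,k_n)`. -/
theorem sgt_insert (n : ℕ) (k : Fin (n + 1) → ℤ) (x : ℤ) :
    sgt (n + 1) k =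
      ∑ i : Fin (n + 1), sgt (n + 1) (Function.update k i (x + (n : ℤ) - (i.1 : ℤ))) := by
  classical
  have key : ((sgt (n + 1) k : ℤ) : ℚ)
      = ((∑ i : Fin (n + 1), sgt (n + 1) (Function.update k i (x + (n : ℤ) - (i.1 : ℤ))) : ℤ) : ℚ)
      := by
    push_cast
    have hc := SgtAux.cc_ne_zero (n + 1)
    apply mul_right_cancel₀ hc
    rw [SgtAux.sgt_mul_cc n k, Finset.sum_mul]
    set Z : Fin (n + 1) → ℚ := fun i => ((k i : ℤ) : ℚ) + (i : ℕ) with hZ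
    have hterm : ∀ i : Fin (n + 1),
        ((sgt (n + 1) (Function.update k i (x + (n : ℤ) - (i.1 : ℤ))) : ℤ) : ℚ) * SgtAux.cc (n + 1)
          = SgtAux.Vd (Function.update Z i ((x : ℚ) + (n : ℚ))) := by
      intro i
      rw [SgtAux.sgt_mul_cc n (Function.update k i (x + (n : ℤ) - (i.1 : ℤ)))]
      congr 1
      funext j
      by_cases h : j = i
      · subst h
        rw [Function.update_self, Function.update_self]
        push_cast
        ring
      · rw [Function.update_of_ne h, Function.update_of_ne h, hZ]
    rw [Finset.sum_congr rfl fun i _ => hterm i]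
    exact (SgtAux.lagrange_rat (Nat.succ_pos n) Z ((x : ℚ) + (n : ℚ))).symm
  exact_mod_cast key
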